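/- Let G and H be finite simple graphs with H nonempty and χ(H) = r. Then χ^(r)(G) = χ(G[H]), where G[H] is the lexicographic product of G and H. -/

import Mathlib

/-- The lexicographic product `G[H]` of two simple graphs: `(u, v)` is adjacent to
`(u', v')` iff `u` is adjacent to `u'` in `G`, or `u = u'` and `v` is adjacent to
`v'` in `H`. -/
def SimpleGraph.lexProd {V W : Type*} (G : SimpleGraph V) (H : SimpleGraph W) :
    SimpleGraph (V × W) where
  Adj p q := G.Adj p.1 q.1 ∨ (p.1 = q.1 ∧ H.Adj p.2 q.2)
  symm := by
    constructor
    rintro p q (h | ⟨h1, h2⟩)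
    · exact Or.inl h.symm
    · exact Or.inr ⟨h1.symm, h2.symm⟩
  loopless := by
    constructor
    rintro p (h | ⟨-, h⟩)
    · exact G.irrefl h
    · exact H.irrefl h

/-- For finite graphs `G` and `H` with `H` nonempty and `χ(H) = r`, the `r`-set
chromatic number of `G` equals the chromatic number of the lexicographic product
`G[H]`. -/
theorem stmt_8 {V W : Type*} [Fintype V] [Fintype W] [Nonempty W]
    (G : SimpleGraph V) (H : SimpleGraph W) (r : ℕ)
    (hH : H.chromaticNumber = (r : ℕ∞)) :
    ((sInf {n : ℕ | ∃ f : V → Finset (Fin n),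
        (∀ v, (f v).card = r) ∧
        ∀ v w, G.Adj v w → Disjoint (f v) (f w)} : ℕ) : ℕ∞) =
      (G.lexProd H).chromaticNumber := by
  classical
  have hSet : {n : ℕ | ∃ f : V → Finset (Fin n),
        (∀ v, (f v).card = r) ∧
        ∀ v w, G.Adj v w → Disjoint (f v) (f w)}
      = {n : ℕ | (G.lexProd H).Colorable n} := by
    ext n
    constructor
    · rintro ⟨f, hcard, hdisj⟩
      obtain ⟨h⟩ : H.Colorable r := SimpleGraph.chromaticNumber_le_iff_colorable.mp hH.le
      refine ⟨SimpleGraph.Coloring.mk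
        (fun p => ((f p.1).orderIsoOfFin (hcard p.1) (h p.2) : Fin n)) ?_⟩
      rintro ⟨v, w⟩ ⟨v', w'⟩ hadj heq
      dsimp only at heq hadj
      rcases hadj with hadj | ⟨hv, hadj⟩
      · have h1 := ((f v).orderIsoOfFin (hcard v) (h w)).2
        have h2 := ((f v').orderIsoOfFin (hcard v') (h w')).2
        rw [heq] at h1
        exact (Finset.disjoint_left.mp (hdisj v v' hadj)) h1 h2
      · subst hv
        apply h.valid hadj
        exact ((f v).orderIsoOfFin (hcard v)).injective (Subtype.coe_injective heq)
    · rintro ⟨c⟩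
      have key : ∀ v : V, r ≤ (Finset.univ.image (fun w => c (v, w))).card := by
        intro v
        have hc : H.Colorable (Finset.univ.image (fun w => c (v, w))).card := by
          have hcc : Fintype.card (Finset.univ.image (fun w => c (v, w)) : Finset (Fin n))
              = (Finset.univ.image (fun w => c (v, w))).card := Fintype.card_coe _
          refine hcc ▸ (SimpleGraph.Coloring.mk
            (fun w => (⟨c (v, w), Finset.mem_image_of_mem _ (Finset.mem_univ w)⟩ :
              (Finset.univ.image (fun w => c (v, w)) : Finset (Fin n))))
            ?_).colorable
          intro w w' hadj heq
          exact c.valid (show (G.lexProd H).Adj (v, w) (v, w') from Or.inr ⟨rfl, hadj⟩)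
            (congrArg Subtype.val heq)
        have hle := hH ▸ hc.chromaticNumber_le
        exact_mod_cast hle
      choose f hf1 hf2 using fun v => Finset.exists_subset_card_eq (key v)
      refine ⟨f, hf2, fun v v' hadj => ?_⟩
      rw [Finset.disjoint_left]
      intro a hav hav'
      obtain ⟨w, -, rfl⟩ := Finset.mem_image.mp (hf1 v hav)
      obtain ⟨w', -, heq⟩ := Finset.mem_image.mp (hf1 v' hav')
      exact c.valid (Or.inl hadj) heq.symm
  have hcol : (G.lexProd H).Colorable (Fintype.card (V × W)) :=
    SimpleGraph.colorable_of_fintype _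
  rw [hcol.chromaticNumber_eq_sInf, hSet]
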